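/- Let W, W̃ ∈ ℝ^{n×n} be entrywise nonnegative with all column sums equal to 1 (transition matrices of digraphs), and let ε ∈ (0, 2/3). If W̃ is a unit-circle ε-approximation of W, then for every k ∈ ℕ, W̃^k is a unit-circle ε/(1 − 3ε/2)-approximation of W^k. -/

import Mathlib

open Matrix

noncomputable section

/-- The sesquilinear form `x* A y`. -/
def sesq {m : Type*} [Fintype m] (A : Matrix m m ℂ) (x y : m → ℂ) : ℂ :=
  star x ⬝ᵥ (A *ᵥ y)

/-- The squared Euclidean norm of a complex vector. -/
def vnormSq {m : Type*} [Fintype m] (x : m → ℂ) : ℝ :=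
  ∑ i, Complex.normSq (x i)

/-- `W̃` is a *unit-circle ε-approximation* of `W`. -/
def UnitCircleApprox {m : Type*} [Fintype m] (ε : ℝ) (W Wt : Matrix m m ℂ) : Prop :=
  ∀ x y : m → ℂ,
    ‖sesq (W - Wt) x y‖ ≤
      ε / 2 * (vnormSq x + vnormSq y - ‖sesq W x x + sesq W y y‖)

namespace UCAux
variable {n : ℕ}

variable {n : ℕ}

lemma sesq_sub (A B : Matrix (Fin n) (Fin n) ℂ) (x y : Fin n → ℂ) :
    sesq (A - B) x y = sesq A x y - sesq B x y := by
  simp [sesq, Matrix.sub_mulVec, dotProduct_sub]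

lemma sesq_add (A B : Matrix (Fin n) (Fin n) ℂ) (x y : Fin n → ℂ) :
    sesq (A + B) x y = sesq A x y + sesq B x y := by
  simp [sesq, Matrix.add_mulVec, dotProduct_add]

lemma sesq_smul (c : ℂ) (A : Matrix (Fin n) (Fin n) ℂ) (x y : Fin n → ℂ) :
    sesq (c • A) x y = c * sesq A x y := by
  simp [sesq, Matrix.smul_mulVec, dotProduct_smul, smul_eq_mul]

lemma sesq_one (x y : Fin n → ℂ) : sesq 1 x y = star x ⬝ᵥ y := by
  simp [sesq]

lemma sesq_sum {ι : Type*} (s : Finset ι) (M : ι → Matrix (Fin n) (Fin n) ℂ) (x y : Fin n → ℂ) :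
    sesq (∑ j ∈ s, M j) x y = ∑ j ∈ s, sesq (M j) x y := by
  classical
  induction s using Finset.induction_on with
  | empty => simp [sesq]
  | insert _ _ hj ih => rw [Finset.sum_insert hj, sesq_add, ih, Finset.sum_insert hj]

lemma dot_shift (A : Matrix (Fin n) (Fin n) ℂ) (x y : Fin n → ℂ) :
    star x ⬝ᵥ (A *ᵥ y) = star (Aᴴ *ᵥ x) ⬝ᵥ y := by
  rw [Matrix.dotProduct_mulVec, Matrix.star_mulVec, Matrix.conjTranspose_conjTranspose]

lemma star_dot_comm (x y : Fin n → ℂ) : star x ⬝ᵥ y = star (star y ⬝ᵥ x) := by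
  simp [dotProduct, Finset.sum_comm, mul_comm]

lemma sesq_mul_shift (P M Q : Matrix (Fin n) (Fin n) ℂ) (x y : Fin n → ℂ) :
    sesq (P * M * Q) x y = sesq M (Pᴴ *ᵥ x) (Q *ᵥ y) := by
  unfold sesq
  rw [← Matrix.mulVec_mulVec, ← Matrix.mulVec_mulVec, dot_shift]

lemma sesq_conjT (M : Matrix (Fin n) (Fin n) ℂ) (x y : Fin n → ℂ) :
    sesq Mᴴ x y = star (sesq M y x) := by
  unfold sesq
  rw [dot_shift, Matrix.conjTranspose_conjTranspose, star_dot_comm]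

lemma sesq_neg (A : Matrix (Fin n) (Fin n) ℂ) (x y : Fin n → ℂ) :
    sesq (-A) x y = - sesq A x y := by
  simp [sesq, Matrix.neg_mulVec]

lemma star_dot_self (x : Fin n → ℂ) : star x ⬝ᵥ x = (vnormSq x : ℂ) := by
  simp only [dotProduct, vnormSq, Pi.star_apply, Complex.star_def, Complex.ofReal_sum]
  exact Finset.sum_congr rfl fun i _ => (Complex.normSq_eq_conj_mul_self (z := x i)).symm ▸ rfl

lemma vnormSq_nonneg (x : Fin n → ℂ) : 0 ≤ vnormSq x :=
  Finset.sum_nonneg fun i _ => Complex.normSq_nonneg _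

lemma vnormSq_smul (c : ℂ) (x : Fin n → ℂ) :
    vnormSq (c • x) = Complex.normSq c * vnormSq x := by
  simp [vnormSq, Complex.normSq_mul, Finset.mul_sum]

lemma sesq_smul_vec (M : Matrix (Fin n) (Fin n) ℂ) (c d : ℂ) (x y : Fin n → ℂ) :
    sesq M (c • x) (d • y) = star c * d * sesq M x y := by
  unfold sesq
  rw [Matrix.mulVec_smul]
  simp [dotProduct_smul, smul_dotProduct, smul_eq_mul]
  ring


lemma stoch_pow (V : Matrix (Fin n) (Fin n) ℝ) (hnn : ∀ i j, 0 ≤ V i j)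
    (hcol : ∀ j, ∑ i, V i j = 1) (k : ℕ) :
    (∀ i j, 0 ≤ (V ^ k) i j) ∧ (∀ j, ∑ i, (V ^ k) i j = 1) := by
  induction k with
  | zero =>
    constructor
    · intro i j
      by_cases hij : i = j <;> simp [pow_zero, Matrix.one_apply, hij]
    · intro j
      simp [pow_zero, Matrix.one_apply]
  | succ k ih =>
    rw [pow_succ]
    constructor
    · intro i j
      rw [Matrix.mul_apply]
      exact Finset.sum_nonneg fun l _ => mul_nonneg (ih.1 i l) (hnn l j)
    · intro j
      simp only [Matrix.mul_apply]
      rw [Finset.sum_comm]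
      calc ∑ l, ∑ i, (V ^ k) i l * V l j = ∑ l, (∑ i, (V ^ k) i l) * V l j := by
            simp [Finset.sum_mul]
        _ = ∑ l, V l j := by
            refine Finset.sum_congr rfl fun l _ => by rw [ih.2 l, one_mul]
        _ = 1 := hcol j

lemma l1_unit (V : Matrix (Fin n) (Fin n) ℝ) (hnn : ∀ i j, 0 ≤ V i j)
    (hcol : ∀ j, ∑ i, V i j = 1) {ν : ℂ} (hν : ‖ν‖ < 1) :
    IsUnit (1 - ν • V.map Complex.ofReal).det := by
  rw [isUnit_iff_ne_zero]
  intro hdet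
  obtain ⟨v, hv0, hv⟩ := (Matrix.exists_mulVec_eq_zero_iff).2 hdet
  -- v = ν • (V' *ᵥ v)
  have hveq : ∀ i, v i = ν * ((V.map Complex.ofReal *ᵥ v) i) := by
    have h2 := hv
    rw [Matrix.sub_mulVec, Matrix.one_mulVec, sub_eq_zero] at h2
    intro i
    calc v i = ((ν • V.map Complex.ofReal) *ᵥ v) i := by rw [← h2]
      _ = ν * ((V.map Complex.ofReal *ᵥ v) i) := by
          rw [Matrix.smul_mulVec]; rfl
  -- ℓ¹ norm
  set S := ∑ i, ‖v i‖ with hS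
  have hSpos : 0 < S := by
    have : ∃ i, v i ≠ 0 := Function.ne_iff.1 hv0
    obtain ⟨i, hi⟩ := this
    refine Finset.sum_pos' (fun j _ => (norm_nonneg _)) ⟨i, Finset.mem_univ i, ?_⟩
    exact norm_pos_iff.2 hi
  have hcontr : S ≤ ‖ν‖ * S := by
    calc S = ∑ i, ‖v i‖ := rfl
      _ = ∑ i, ‖ν‖ * ‖(V.map Complex.ofReal *ᵥ v) i‖ := by
          refine Finset.sum_congr rfl fun i _ => ?_
          rw [hveq i, norm_mul]
      _ ≤ ‖ν‖ * S := by
          rw [← Finset.mul_sum]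
          refine mul_le_mul_of_nonneg_left ?_ (norm_nonneg _)
          calc ∑ i, ‖(V.map Complex.ofReal *ᵥ v) i‖
              ≤ ∑ i, ∑ j, V i j * ‖v j‖ := by
                refine Finset.sum_le_sum fun i _ => ?_
                rw [Matrix.mulVec, dotProduct]
                refine le_trans (norm_sum_le _ _) ?_
                refine Finset.sum_le_sum fun j _ => ?_
                rw [norm_mul, Matrix.map_apply, Complex.norm_real, Real.norm_eq_abs, abs_of_nonneg (hnn i j)]
            _ = ∑ j, (∑ i, V i j) * ‖v j‖ := by
                rw [Finset.sum_comm]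
                simp [Finset.sum_mul]
            _ = S := by
                refine Finset.sum_congr rfl fun j _ => by rw [hcol j, one_mul]
  nlinarith [hSpos, hν, norm_nonneg ν]



lemma lim_le (k : ℕ) (C1 C2 : ℝ) (H : ∀ r : ℝ, 0 < r → r < 1 → r^k * C1 ≤ C2) : C1 ≤ C2 := by
  have h1 : Filter.Tendsto (fun r : ℝ => r^k * C1) (nhdsWithin 1 (Set.Iio 1)) (nhds C1) := by
    have h2 : Filter.Tendsto (fun r : ℝ => r^k * C1) (nhds 1) (nhds (1^k * C1)) :=
      Filter.Tendsto.mul_const _ (Filter.Tendsto.pow Filter.tendsto_id k)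
    simpa using h2.mono_left nhdsWithin_le_nhds
  refine le_of_tendsto h1 ?_
  filter_upwards [Ioo_mem_nhdsLT_of_mem (by norm_num : (1:ℝ) ∈ Set.Ioc 0 1)] with r hr
  exact H r hr.1 hr.2

set_option maxHeartbeats 1000000 in
lemma main_est (ε : ℝ) (h0 : 0 < ε) (h1 : ε < 2/3)
    (W Wt : Matrix (Fin n) (Fin n) ℝ)
    (hWnn : ∀ i j, 0 ≤ W i j) (hWcol : ∀ j, ∑ i, W i j = 1)
    (hWtnn : ∀ i j, 0 ≤ Wt i j) (hWtcol : ∀ j, ∑ i, Wt i j = 1)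
    (h : UnitCircleApprox ε (W.map Complex.ofReal) (Wt.map Complex.ofReal))
    (k : ℕ) (hk : 0 < k) (z : ℂ) (hz : ‖z‖ = 1)
    (r : ℝ) (hr0 : 0 < r) (hr1 : r < 1) (x y : Fin n → ℂ) :
    r^k * ‖sesq ((W^k).map Complex.ofReal - (Wt^k).map Complex.ofReal) x y‖ ≤
      ε / (2*(1-ε)) * (vnormSq x + vnormSq y -
        r^k * (z * (sesq ((W^k).map Complex.ofReal) x x
                    + sesq ((W^k).map Complex.ofReal) y y)).re) := by
  have hε1 : ε < 1 := by linarith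
  -- k-th root of z
  obtain ⟨ζ, hζ⟩ : ∃ ζ : ℂ, ζ ^ k = z := IsAlgClosed.exists_pow_nat_eq z hk
  have hζabs : ‖ζ‖ = 1 := by
    have h1 : (‖ζ‖) ^ k = 1 := by rw [← norm_pow, hζ, hz]
    by_contra hne
    rcases lt_or_gt_of_ne hne with hlt | hgt
    · have := pow_lt_one₀ (norm_nonneg ζ) hlt hk.ne'
      rw [h1] at this; exact lt_irrefl _ this
    · have := one_lt_pow₀ hgt hk.ne'
      rw [h1] at this; exact lt_irrefl _ this
  set ω : ℂ := Complex.exp ((2 * Real.pi / k : ℝ) * Complex.I) with hω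
  have hωabs : ‖ω‖ = 1 := Complex.norm_exp_ofReal_mul_I _
  have hωk : ω ^ k = 1 := by
    rw [hω, ← Complex.exp_nat_mul]
    have : (k:ℂ) * ((2 * Real.pi / k : ℝ) * Complex.I) = 2 * Real.pi * Complex.I := by
      have hk' : (k:ℂ) ≠ 0 := Nat.cast_ne_zero.2 hk.ne'
      push_cast
      field_simp
    rw [this, Complex.exp_two_pi_mul_I]
  have hωm : ∀ m : ℕ, 0 < m → m < k → ω ^ m ≠ 1 := by
    intro m hm hmk
    rw [hω, ← Complex.exp_nat_mul]
    intro hone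
    rw [Complex.exp_eq_one_iff] at hone
    obtain ⟨t, ht⟩ := hone
    have hpi : (2 * ↑Real.pi * Complex.I : ℂ) ≠ 0 := by
      simp [Complex.I_ne_zero, Real.pi_ne_zero]
    have hk' : (k:ℂ) ≠ 0 := Nat.cast_ne_zero.2 hk.ne'
    have hmc : (m : ℂ) = t * k := by
      have ht' : (m:ℂ) * ((2 * Real.pi / k : ℝ) * Complex.I) * k = t * (2 * Real.pi * Complex.I) * k := by
        rw [ht]
      push_cast at ht'
      field_simp at ht'
      refine mul_right_cancel₀ hpi ?_
      linear_combination (2 * ↑Real.pi * Complex.I) * ht'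
    have hmz : (m : ℤ) = t * k := by exact_mod_cast hmc
    rcases le_or_gt t 0 with hle | hpos
    · have : (m:ℤ) ≤ 0 := by nlinarith [(by exact_mod_cast hk.le : (0:ℤ) ≤ k)]
      omega
    · have : (k:ℤ) ≤ m := by nlinarith
      omega

  -- basic notation
  set W' := W.map Complex.ofReal with hW'def
  set Wt' := Wt.map Complex.ofReal with hWt'def
  have hmapPow : ∀ (V : Matrix (Fin n) (Fin n) ℝ) (m : ℕ),
      (V ^ m).map Complex.ofReal = (V.map Complex.ofReal) ^ m := by
    intro V m
    have h2 := map_pow (Complex.ofRealHom.mapMatrix (m := Fin n)) V m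
    have h3 : ∀ (U : Matrix (Fin n) (Fin n) ℝ),
        Complex.ofRealHom.mapMatrix U = U.map Complex.ofReal := fun U => rfl
    rw [h3, h3] at h2
    exact h2
  set ν : ℕ → ℂ := fun j => (r : ℂ) * ζ * ω ^ j with hνdef
  have hνj : ∀ j, ν j = (r : ℂ) * ζ * ω ^ j := fun _ => rfl
  have hνabs : ∀ j, ‖ν j‖ = r := by
    intro j
    rw [hνj, norm_mul, norm_mul, norm_pow, hζabs, hωabs,
      Complex.norm_real, Real.norm_eq_abs, abs_of_pos hr0]
    simp
  have hνlt : ∀ j, ‖ν j‖ < 1 := fun j => by rw [hνabs]; exact hr1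
  have hνpow : ∀ j, (ν j) ^ k = (r : ℂ) ^ k * z := by
    intro j
    have h2 : ((r:ℂ) * ζ * ω ^ j) ^ k = (r:ℂ) ^ k * ζ ^ k * (ω ^ k) ^ j := by ring
    rw [hνj, h2, hωk, one_pow, hζ, mul_one]
  set A : ℕ → Matrix (Fin n) (Fin n) ℂ := fun j => 1 - ν j • W' with hAdef
  set At : ℕ → Matrix (Fin n) (Fin n) ℂ := fun j => 1 - ν j • Wt' with hAtdef
  set N : ℕ → Matrix (Fin n) (Fin n) ℂ := fun j => ∑ m ∈ Finset.range k, (ν j • W') ^ m with hNdef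
  set Nt : ℕ → Matrix (Fin n) (Fin n) ℂ := fun j => ∑ m ∈ Finset.range k, (ν j • Wt') ^ m with hNtdef
  have hAj : ∀ j, A j = 1 - ν j • W' := fun _ => rfl
  have hAtj : ∀ j, At j = 1 - ν j • Wt' := fun _ => rfl
  have hNj : ∀ j, N j = ∑ m ∈ Finset.range k, (ν j • W') ^ m := fun _ => rfl
  have hNtj : ∀ j, Nt j = ∑ m ∈ Finset.range k, (ν j • Wt') ^ m := fun _ => rfl
  set B : Matrix (Fin n) (Fin n) ℂ := 1 - ((r:ℂ)^k * z) • ((W ^ k).map Complex.ofReal) with hBdef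
  set Bt : Matrix (Fin n) (Fin n) ℂ := 1 - ((r:ℂ)^k * z) • ((Wt ^ k).map Complex.ofReal) with hBtdef
  have hBW : B = 1 - ((r:ℂ)^k * z) • (W' ^ k) := by rw [hBdef, hmapPow]
  have hBtW : Bt = 1 - ((r:ℂ)^k * z) • (Wt' ^ k) := by rw [hBtdef, hmapPow]
  have hAN : ∀ j, A j * N j = B := by
    intro j
    rw [hAj, hNj, hBW, ← neg_sub (ν j • W') 1, neg_mul, mul_geom_sum, neg_sub, smul_pow, hνpow]
  have hNA : ∀ j, N j * A j = B := by
    intro j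
    rw [hAj, hNj, hBW, ← neg_sub (ν j • W') 1, mul_neg, geom_sum_mul, neg_sub, smul_pow, hνpow]
  have hAtN : ∀ j, At j * Nt j = Bt := by
    intro j
    rw [hAtj, hNtj, hBtW, ← neg_sub (ν j • Wt') 1, neg_mul, mul_geom_sum, neg_sub, smul_pow, hνpow]
  have hgeom : ∀ m, 0 < m → m < k → ∑ j ∈ Finset.range k, (ω ^ m) ^ j = 0 := by
    intro m hm hmk
    have hne : ω ^ m ≠ 1 := hωm m hm hmk
    have hone : (ω ^ m) ^ k = 1 := by
      rw [← pow_mul, mul_comm m k, pow_mul, hωk, one_pow]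
    have h2 := geom_sum_mul (ω ^ m) k
    rw [hone, sub_self] at h2
    rcases mul_eq_zero.1 h2 with hgood | hbad
    · exact hgood
    · exact absurd (sub_eq_zero.1 hbad) hne
  have hSNgen : ∀ (M : Matrix (Fin n) (Fin n) ℂ),
      ∑ j ∈ Finset.range k, ∑ m ∈ Finset.range k, (ν j • M) ^ m
        = (k:ℂ) • (1 : Matrix (Fin n) (Fin n) ℂ) := by
    intro M
    rw [Finset.sum_comm]
    have hterm : ∀ m ∈ Finset.range k,
        ∑ j ∈ Finset.range k, (ν j • M) ^ m
          = (((r:ℂ) * ζ) ^ m * ∑ j ∈ Finset.range k, (ω ^ m) ^ j) • M ^ m := by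
      intro m _
      rw [Finset.mul_sum, Finset.sum_smul]
      refine Finset.sum_congr rfl fun j _ => ?_
      rw [smul_pow, hνj]
      have h2 : ((r:ℂ) * ζ * ω ^ j) ^ m = ((r:ℂ) * ζ) ^ m * (ω ^ m) ^ j := by ring
      rw [h2]
    rw [Finset.sum_congr rfl hterm]
    calc ∑ m ∈ Finset.range k, (((r:ℂ) * ζ) ^ m * ∑ j ∈ Finset.range k, (ω ^ m) ^ j) • M ^ m
        = (((r:ℂ) * ζ) ^ 0 * ∑ j ∈ Finset.range k, (ω ^ 0) ^ j) • M ^ 0 := by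
          refine Finset.sum_eq_single_of_mem 0 (Finset.mem_range.2 hk) fun m hm hm0 => ?_
          rw [hgeom m (Nat.pos_of_ne_zero hm0) (Finset.mem_range.1 hm), mul_zero, zero_smul]
      _ = (k:ℂ) • (1 : Matrix (Fin n) (Fin n) ℂ) := by simp
  have hSN : ∑ j ∈ Finset.range k, N j = (k:ℂ) • (1 : Matrix (Fin n) (Fin n) ℂ) := by
    rw [Finset.sum_congr rfl (fun j _ => hNj j)]; exact hSNgen W'
  have hSNt : ∑ j ∈ Finset.range k, Nt j = (k:ℂ) • (1 : Matrix (Fin n) (Fin n) ℂ) := by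
    rw [Finset.sum_congr rfl (fun j _ => hNtj j)]; exact hSNgen Wt'
  -- invertibility
  have hADet : ∀ j, IsUnit (A j).det := fun j => l1_unit W hWnn hWcol (hνlt j)
  have hAtDet : ∀ j, IsUnit (At j).det := fun j => l1_unit Wt hWtnn hWtcol (hνlt j)
  have hrkz : ‖(r:ℂ)^k * z‖ < 1 := by
    rw [norm_mul, norm_pow, hz, mul_one, Complex.norm_real, Real.norm_eq_abs, abs_of_pos hr0]
    exact pow_lt_one₀ hr0.le hr1 hk.ne'
  have hBDet : IsUnit B.det :=
    l1_unit (W ^ k) (stoch_pow W hWnn hWcol k).1 (stoch_pow W hWnn hWcol k).2 hrkz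
  have hBtDet : IsUnit Bt.det :=
    l1_unit (Wt ^ k) (stoch_pow Wt hWtnn hWtcol k).1 (stoch_pow Wt hWtnn hWtcol k).2 hrkz
  have hsumAi : ∑ j ∈ Finset.range k, (A j)⁻¹ = (k:ℂ) • B⁻¹ := by
    have hinv : ∀ j, (A j)⁻¹ = N j * B⁻¹ := by
      intro j
      refine Matrix.inv_eq_right_inv ?_
      rw [← Matrix.mul_assoc, hAN j, Matrix.mul_nonsing_inv _ hBDet]
    calc ∑ j ∈ Finset.range k, (A j)⁻¹ = ∑ j ∈ Finset.range k, N j * B⁻¹ :=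
          Finset.sum_congr rfl fun j _ => hinv j
      _ = (∑ j ∈ Finset.range k, N j) * B⁻¹ := by rw [Finset.sum_mul]
      _ = (k:ℂ) • B⁻¹ := by rw [hSN, Matrix.smul_mul, Matrix.one_mul]
  have hsumAti : ∑ j ∈ Finset.range k, (At j)⁻¹ = (k:ℂ) • Bt⁻¹ := by
    have hinv : ∀ j, (At j)⁻¹ = Nt j * Bt⁻¹ := by
      intro j
      refine Matrix.inv_eq_right_inv ?_
      rw [← Matrix.mul_assoc, hAtN j, Matrix.mul_nonsing_inv _ hBtDet]
    calc ∑ j ∈ Finset.range k, (At j)⁻¹ = ∑ j ∈ Finset.range k, Nt j * Bt⁻¹ :=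
          Finset.sum_congr rfl fun j _ => hinv j
      _ = (∑ j ∈ Finset.range k, Nt j) * Bt⁻¹ := by rw [Finset.sum_mul]
      _ = (k:ℂ) • Bt⁻¹ := by rw [hSNt, Matrix.smul_mul, Matrix.one_mul]
  clear_value ν A At N Nt B Bt W' Wt'
  -- quadratic form facts
  have hε2 : (0:ℝ) < 1 - ε := by linarith
  have F1 : ∀ u : Fin n → ℂ, ‖sesq W' u u‖ ≤ vnormSq u := by
    intro u
    have h2 := h u u
    have h3 : (0:ℝ) ≤ ε / 2 * (vnormSq u + vnormSq u
        - ‖sesq W' u u + sesq W' u u‖) :=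
      le_trans (norm_nonneg _) h2
    have h4 : ‖sesq W' u u + sesq W' u u‖ = 2 * ‖sesq W' u u‖ := by
      rw [← two_mul, norm_mul, Complex.norm_two]
    rw [h4] at h3
    nlinarith
  have F2 : ∀ c : ℂ, ‖c‖ ≤ 1 → ∀ u v : Fin n → ℂ,
      ‖sesq (W' - Wt') u v‖ ≤
        ε / 2 * ((vnormSq u - (c * sesq W' u u).re) + (vnormSq v - (c * sesq W' v v).re)) := by
    intro c hc u v
    have h2 := h u v
    have key : (c * sesq W' u u).re + (c * sesq W' v v).re
        ≤ ‖sesq W' u u + sesq W' v v‖ := by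
      have e : (c * sesq W' u u).re + (c * sesq W' v v).re
          = (c * (sesq W' u u + sesq W' v v)).re := by
        rw [mul_add, Complex.add_re]
      rw [e]
      refine le_trans (Complex.re_le_norm _) ?_
      rw [norm_mul]
      nlinarith [norm_nonneg (sesq W' u u + sesq W' v v)]
    refine le_trans h2 ?_
    nlinarith
  have hqA : ∀ j (u : Fin n → ℂ),
      (sesq (A j) u u).re = vnormSq u - (ν j * sesq W' u u).re := by
    intro j u
    rw [hAj, sesq_sub, sesq_smul, sesq_one, star_dot_self, Complex.sub_re, Complex.ofReal_re]
  have F2q : ∀ j (u v : Fin n → ℂ),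
      ‖sesq (W' - Wt') u v‖ ≤
        ε / 2 * ((sesq (A j) u u).re + (sesq (A j) v v).re) := by
    intro j u v
    have h2 := F2 (ν j) (le_of_eq_of_le (hνabs j) hr1.le) u v
    rw [hqA j u, hqA j v]
    exact h2
  have F2t : ∀ j (u v : Fin n → ℂ) (t : ℝ), 0 < t →
      ‖sesq (W' - Wt') u v‖ ≤
        ε / 2 * (t * (sesq (A j) u u).re + (sesq (A j) v v).re / t) := by
    intro j u v t ht
    have hs0 : 0 < Real.sqrt t := Real.sqrt_pos.2 ht
    set s : ℝ := Real.sqrt t with hsdef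
    have hst : (s:ℝ) * s = t := Real.mul_self_sqrt ht.le
    have hL : sesq (W' - Wt') ((s:ℂ) • u) (((s⁻¹ : ℝ):ℂ) • v) = sesq (W' - Wt') u v := by
      rw [sesq_smul_vec, Complex.star_def, Complex.conj_ofReal]
      push_cast
      rw [mul_inv_cancel₀ (by exact_mod_cast hs0.ne' : (s:ℂ) ≠ 0), one_mul]
    have hqu : (sesq (A j) ((s:ℂ) • u) ((s:ℂ) • u)).re = t * (sesq (A j) u u).re := by
      rw [sesq_smul_vec, Complex.star_def, Complex.conj_ofReal]
      have e : ((s:ℂ) * (s:ℂ)) = ((t:ℝ):ℂ) := by rw [← hst]; push_cast; ring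
      rw [e, Complex.re_ofReal_mul]
    have hqv : (sesq (A j) (((s⁻¹:ℝ):ℂ) • v) (((s⁻¹:ℝ):ℂ) • v)).re
        = (sesq (A j) v v).re / t := by
      rw [sesq_smul_vec, Complex.star_def, Complex.conj_ofReal]
      have e : (((s⁻¹:ℝ):ℂ) * ((s⁻¹:ℝ):ℂ)) = ((t⁻¹:ℝ):ℂ) := by
        rw [← hst]; push_cast; rw [mul_inv]
      rw [e, Complex.re_ofReal_mul, div_eq_inv_mul]
    have h2 := F2q j ((s:ℂ) • u) (((s⁻¹ : ℝ):ℂ) • v)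
    rw [hL, hqu, hqv] at h2
    exact h2
  have F3 : ∀ j (u : Fin n → ℂ),
      (1 - ε) * (sesq (A j) u u).re ≤ (sesq (At j) u u).re := by
    intro j u
    have hAAt : A j - At j = ν j • (Wt' - W') := by
      rw [hAj, hAtj, smul_sub]; abel
    have e1 : (sesq (A j) u u).re - (sesq (At j) u u).re
        = (ν j * - sesq (W' - Wt') u u).re := by
      rw [← Complex.sub_re, ← sesq_sub, hAAt, sesq_smul]
      congr 2
      rw [← sesq_neg, neg_sub]
    have e2 : (sesq (A j) u u).re - (sesq (At j) u u).re
        ≤ ‖sesq (W' - Wt') u u‖ := by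
      rw [e1]
      refine le_trans (Complex.re_le_norm _) ?_
      rw [norm_mul, norm_neg]
      calc ‖ν j‖ * ‖sesq (W' - Wt') u u‖
          ≤ 1 * ‖sesq (W' - Wt') u u‖ := by
            refine mul_le_mul_of_nonneg_right ?_ (norm_nonneg _)
            exact le_of_eq_of_le (hνabs j) hr1.le
        _ = _ := one_mul _
    have e3 : ‖sesq (W' - Wt') u u‖ ≤ ε * (sesq (A j) u u).re := by
      have := F2q j u u
      nlinarith
    nlinarith
  -- the key self-improving estimate
  have hkC : ((k:ℂ)) ≠ 0 := Nat.cast_ne_zero.2 hk.ne'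
  have hkR : (0:ℝ) < (k:ℝ) := Nat.cast_pos.2 hk
  have star_ineq : ∀ x' y' : Fin n → ℂ,
      ‖sesq (Bt - B) x' y'‖ ≤
        ε / 2 * ((sesq B x' x').re + ‖sesq (Bt - B) x' x'‖
          + (sesq B y' y').re / (1 - ε)) := by
    intro x' y'
    set w1 := Btᴴ *ᵥ x' with hw1def
    set w2 := B *ᵥ y' with hw2def
    set u : ℕ → (Fin n → ℂ) := fun j => ((At j)⁻¹)ᴴ *ᵥ w1 with hudef
    set v : ℕ → (Fin n → ℂ) := fun j => (A j)⁻¹ *ᵥ w2 with hvdef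
    have huj : ∀ j, u j = ((At j)⁻¹)ᴴ *ᵥ w1 := fun _ => rfl
    have hvj : ∀ j, v j = (A j)⁻¹ *ᵥ w2 := fun _ => rfl
    -- telescoping
    have step1 : ∀ j, (A j)⁻¹ - (At j)⁻¹ = ν j • ((At j)⁻¹ * (W' - Wt') * (A j)⁻¹) := by
      intro j
      have e : At j - A j = ν j • (W' - Wt') := by
        rw [hAj, hAtj, smul_sub]; abel
      have e2 : (At j)⁻¹ * (At j - A j) * (A j)⁻¹ = (A j)⁻¹ - (At j)⁻¹ := by
        rw [Matrix.mul_sub, Matrix.nonsing_inv_mul _ (hAtDet j), Matrix.sub_mul,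
          Matrix.one_mul, Matrix.mul_assoc ((At j)⁻¹), Matrix.mul_nonsing_inv _ (hADet j),
          Matrix.mul_one]
      rw [← e2, e, Matrix.mul_smul, Matrix.smul_mul]
    have step2 : ∑ j ∈ Finset.range k, ((A j)⁻¹ - (At j)⁻¹) = (k:ℂ) • (B⁻¹ - Bt⁻¹) := by
      rw [Finset.sum_sub_distrib, hsumAi, hsumAti, smul_sub]
    have step3 : Bt * (B⁻¹ - Bt⁻¹) * B = Bt - B := by
      rw [Matrix.mul_sub, Matrix.sub_mul, Matrix.mul_nonsing_inv _ hBtDet, Matrix.one_mul,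
        Matrix.mul_assoc, Matrix.nonsing_inv_mul _ hBDet, Matrix.mul_one]
    have hTel : Bt - B = (k:ℂ)⁻¹ • ∑ j ∈ Finset.range k,
        ν j • ((Bt * (At j)⁻¹ * (W' - Wt')) * ((A j)⁻¹ * B)) := by
      have e4 : Bt - B = (k:ℂ)⁻¹ • (Bt * (∑ j ∈ Finset.range k, ((A j)⁻¹ - (At j)⁻¹)) * B) := by
        rw [step2, Matrix.mul_smul, Matrix.smul_mul, smul_smul,
          inv_mul_cancel₀ hkC, one_smul, step3]
      rw [e4]
      congr 1
      rw [Finset.mul_sum, Finset.sum_mul]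
      refine Finset.sum_congr rfl fun j _ => ?_
      rw [step1 j, Matrix.mul_smul, Matrix.smul_mul]
      congr 1
      rw [← Matrix.mul_assoc, ← Matrix.mul_assoc, ← Matrix.mul_assoc]
    -- sesq of the telescoped sum
    have hses : sesq (Bt - B) x' y'
        = (k:ℂ)⁻¹ * ∑ j ∈ Finset.range k, ν j * sesq (W' - Wt') (u j) (v j) := by
      rw [hTel, sesq_smul, sesq_sum]
      congr 1
      refine Finset.sum_congr rfl fun j _ => ?_
      rw [sesq_smul, sesq_mul_shift]
      congr 1
      rw [huj j, hvj j, hw1def, hw2def, Matrix.mulVec_mulVec, Matrix.mulVec_mulVec,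
        Matrix.conjTranspose_mul]
    -- identities for the sums of quadratic forms
    have hID1 : ∀ j, (sesq (At j) (u j) (u j)).re = (sesq ((At j)⁻¹) w1 w1).re := by
      intro j
      have e1 : (At j)⁻¹ * (At j) * ((At j)⁻¹)ᴴ = ((At j)⁻¹)ᴴ := by
        rw [Matrix.nonsing_inv_mul _ (hAtDet j), Matrix.one_mul]
      have e2 := sesq_mul_shift ((At j)⁻¹) (At j) (((At j)⁻¹)ᴴ) w1 w1
      rw [e1, sesq_conjT] at e2
      rw [huj, ← e2, Complex.star_def, Complex.conj_re]
    have hID2 : ∀ j, (sesq (A j) (v j) (v j)).re = (sesq ((A j)⁻¹) w2 w2).re := by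
      intro j
      have e1 : A j *ᵥ (v j) = w2 := by
        rw [hvj, Matrix.mulVec_mulVec, Matrix.mul_nonsing_inv _ (hADet j), Matrix.one_mulVec]
      have e2 : sesq (A j) (v j) (v j) = star (sesq ((A j)⁻¹) w2 w2) := by
        rw [show sesq (A j) (v j) (v j) = star (v j) ⬝ᵥ (A j *ᵥ v j) from rfl, e1,
          star_dot_comm]
        congr 1
      rw [e2, Complex.star_def, Complex.conj_re]
    have hID3 : ∑ j ∈ Finset.range k, (sesq ((At j)⁻¹) w1 w1).re
        = (k:ℝ) * (sesq Bt x' x').re := by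
      have e1 : ∑ j ∈ Finset.range k, sesq ((At j)⁻¹) w1 w1
          = (k:ℂ) * sesq (Bt⁻¹) w1 w1 := by
        rw [← sesq_sum, hsumAti, sesq_smul]
      have e2 : Bt * Bt⁻¹ * Btᴴ = Btᴴ := by
        rw [Matrix.mul_nonsing_inv _ hBtDet, Matrix.one_mul]
      have e3 := sesq_mul_shift Bt (Bt⁻¹) (Btᴴ) x' x'
      rw [e2, sesq_conjT] at e3
      rw [← Complex.re_sum, e1, ← e3]
      have e4 : ((k:ℂ)) = (((k:ℝ)):ℂ) := by push_cast; rfl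
      rw [e4, Complex.re_ofReal_mul, Complex.star_def, Complex.conj_re]
    have hID4 : ∑ j ∈ Finset.range k, (sesq ((A j)⁻¹) w2 w2).re
        = (k:ℝ) * (sesq B y' y').re := by
      have e1 : ∑ j ∈ Finset.range k, sesq ((A j)⁻¹) w2 w2
          = (k:ℂ) * sesq (B⁻¹) w2 w2 := by
        rw [← sesq_sum, hsumAi, sesq_smul]
      have e2 : sesq (B⁻¹) w2 w2 = star (sesq B y' y') := by
        rw [show sesq (B⁻¹) w2 w2 = star w2 ⬝ᵥ (B⁻¹ *ᵥ w2) from rfl, hw2def,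
          Matrix.mulVec_mulVec, Matrix.nonsing_inv_mul _ hBDet, Matrix.one_mulVec,
          star_dot_comm]
        rfl
      rw [← Complex.re_sum, e1, e2]
      have e4 : ((k:ℂ)) = (((k:ℝ)):ℂ) := by push_cast; rfl
      rw [e4, Complex.re_ofReal_mul, Complex.star_def, Complex.conj_re]
    -- put the chain together
    have hchain : ‖sesq (Bt - B) x' y'‖ ≤
        ε / 2 * ((sesq Bt x' x').re + (sesq B y' y').re / (1 - ε)) := by
      calc ‖sesq (Bt - B) x' y'‖
          = (1/(k:ℝ)) * ‖∑ j ∈ Finset.range k,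
              ν j * sesq (W' - Wt') (u j) (v j)‖ := by
            rw [hses, norm_mul, norm_inv]
            congr 1
            rw [one_div]
            congr 1
            rw [Complex.norm_natCast]
        _ ≤ (1/(k:ℝ)) * ∑ j ∈ Finset.range k,
              ‖ν j * sesq (W' - Wt') (u j) (v j)‖ := by
            refine mul_le_mul_of_nonneg_left (norm_sum_le _ _) (by positivity)
        _ ≤ (1/(k:ℝ)) * ∑ j ∈ Finset.range k,
              (ε / 2 * ((1-ε) * (sesq (A j) (u j) (u j)).re
                + (sesq (A j) (v j) (v j)).re / (1-ε))) := by
            refine mul_le_mul_of_nonneg_left (Finset.sum_le_sum fun j _ => ?_) (by positivity)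
            rw [norm_mul]
            calc ‖ν j‖ * ‖sesq (W' - Wt') (u j) (v j)‖
                ≤ 1 * ‖sesq (W' - Wt') (u j) (v j)‖ := by
                  refine mul_le_mul_of_nonneg_right ?_ (norm_nonneg _)
                  exact le_of_eq_of_le (hνabs j) hr1.le
              _ = ‖sesq (W' - Wt') (u j) (v j)‖ := one_mul _
              _ ≤ _ := F2t j (u j) (v j) (1-ε) hε2
        _ ≤ ε / 2 * ((sesq Bt x' x').re + (sesq B y' y').re / (1 - ε)) := by
            have ha : (1-ε) * ∑ j ∈ Finset.range k, (sesq (A j) (u j) (u j)).re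
                ≤ (k:ℝ) * (sesq Bt x' x').re := by
              rw [← hID3, Finset.mul_sum]
              refine Finset.sum_le_sum fun j _ => ?_
              rw [← hID1 j]
              exact F3 j (u j)
            have hb2 : ∑ j ∈ Finset.range k, (sesq (A j) (v j) (v j)).re
                = (k:ℝ) * (sesq B y' y').re := by
              rw [← hID4]
              exact Finset.sum_congr rfl fun j _ => hID2 j
            have e5a : ∀ j ∈ Finset.range k,
                ε / 2 * ((1-ε) * (sesq (A j) (u j) (u j)).re
                  + (sesq (A j) (v j) (v j)).re / (1-ε))
                = (ε / 2 * (1-ε)) * (sesq (A j) (u j) (u j)).re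
                  + (ε / 2 / (1-ε)) * (sesq (A j) (v j) (v j)).re := fun j _ => by ring
            rw [Finset.sum_congr rfl e5a, Finset.sum_add_distrib, ← Finset.mul_sum,
              ← Finset.mul_sum, hb2]
            have key : (ε / 2 * (1-ε)) * ∑ j ∈ Finset.range k, (sesq (A j) (u j) (u j)).re
                ≤ ε / 2 * ((k:ℝ) * (sesq Bt x' x').re) := by
              have h6 := mul_le_mul_of_nonneg_left ha (by positivity : (0:ℝ) ≤ ε / 2)
              calc (ε / 2 * (1-ε)) * ∑ j ∈ Finset.range k, (sesq (A j) (u j) (u j)).re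
                  = ε / 2 * ((1-ε) * ∑ j ∈ Finset.range k, (sesq (A j) (u j) (u j)).re) := by
                    ring
                _ ≤ _ := h6
            calc (1/(k:ℝ)) * ((ε / 2 * (1-ε)) * ∑ j ∈ Finset.range k,
                  (sesq (A j) (u j) (u j)).re
                  + (ε / 2 / (1-ε)) * ((k:ℝ) * (sesq B y' y').re))
                ≤ (1/(k:ℝ)) * (ε / 2 * ((k:ℝ) * (sesq Bt x' x').re)
                  + (ε / 2 / (1-ε)) * ((k:ℝ) * (sesq B y' y').re)) := by
                  refine mul_le_mul_of_nonneg_left ?_ (by positivity)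
                  linarith
              _ = ε / 2 * ((sesq Bt x' x').re + (sesq B y' y').re / (1 - ε)) := by
                  field_simp
    have hsplit : (sesq Bt x' x').re ≤ (sesq B x' x').re + ‖sesq (Bt - B) x' x'‖ := by
      have e : (sesq Bt x' x').re = (sesq B x' x').re + (sesq (Bt - B) x' x').re := by
        rw [sesq_sub, Complex.sub_re]; ring
      rw [e]
      have := Complex.re_le_norm (sesq (Bt - B) x' x')
      linarith
    refine le_trans hchain ?_
    have hb : (0:ℝ) ≤ ε / 2 := by positivity
    nlinarith [hsplit]
  -- self improvement at the diagonal
  have hdx : ∀ x' : Fin n → ℂ, ‖sesq (Bt - B) x' x'‖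
      ≤ ε / (1-ε) * (sesq B x' x').re := by
    intro x'
    have h2 := star_ineq x' x'
    have hd0 : (0:ℝ) ≤ ‖sesq (Bt - B) x' x'‖ := norm_nonneg _
    rw [div_mul_eq_mul_div, le_div_iff₀ hε2]
    have h3 : (1-ε) * ((sesq B x' x').re / (1-ε)) = (sesq B x' x').re := by field_simp
    nlinarith [mul_le_mul_of_nonneg_left h2 hε2.le, h3, hd0, h0.le, hε2.le]
  -- final bound for the pair (x, y)
  have hfin : ‖sesq (Bt - B) x y‖
      ≤ ε / (2*(1-ε)) * ((sesq B x x).re + (sesq B y y).re) := by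
    have h2 := star_ineq x y
    have h3 := hdx x
    rw [div_mul_eq_mul_div, le_div_iff₀ (by positivity : (0:ℝ) < 2*(1-ε))]
    have h4 : (1-ε) * ((sesq B y y).re / (1-ε)) = (sesq B y y).re := by field_simp
    have h5 : (1-ε) * (ε / (1-ε) * (sesq B x x).re) = ε * (sesq B x x).re := by field_simp
    nlinarith [mul_le_mul_of_nonneg_left h2 hε2.le, mul_le_mul_of_nonneg_left h3 hε2.le,
      h4, h5, hε2.le, h0.le]
  -- translate to the required form
  have hBtB : Bt - B = ((r:ℂ)^k * z) •
      ((W^k).map Complex.ofReal - (Wt^k).map Complex.ofReal) := by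
    rw [hBdef, hBtdef, smul_sub]
    abel
  have habsrk : ‖(r:ℂ)^k * z‖ = r^k := by
    rw [norm_mul, norm_pow, hz, mul_one, Complex.norm_real, Real.norm_eq_abs, abs_of_pos hr0]
  have hLHS : ‖sesq (Bt - B) x y‖
      = r^k * ‖sesq ((W^k).map Complex.ofReal - (Wt^k).map Complex.ofReal) x y‖ := by
    rw [hBtB, sesq_smul, norm_mul, habsrk]
  have hreB : ∀ u : Fin n → ℂ,
      (sesq B u u).re = vnormSq u - r^k * (z * sesq ((W^k).map Complex.ofReal) u u).re := by
    intro u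
    rw [hBdef, sesq_sub, sesq_smul, sesq_one, star_dot_self, Complex.sub_re, Complex.ofReal_re]
    congr 1
    have e : ((r:ℂ)^k * z) * sesq ((W^k).map Complex.ofReal) u u
        = ((r^k : ℝ) : ℂ) * (z * sesq ((W^k).map Complex.ofReal) u u) := by
      push_cast
      ring
    rw [e, Complex.re_ofReal_mul]
  rw [← hLHS]
  have hre2 : (sesq B x x).re + (sesq B y y).re
      = vnormSq x + vnormSq y - r^k * (z * (sesq ((W^k).map Complex.ofReal) x x
          + sesq ((W^k).map Complex.ofReal) y y)).re := by
    rw [hreB x, hreB y, mul_add, Complex.add_re]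
    ring
  rw [← hre2]
  exact hfin


end UCAux

/-- If `W, W̃` are transition matrices of digraphs (nonnegative
with unit column sums), `ε ∈ (0, 2/3)`, and `W̃ ∘≈_ε W`, then for every `k ∈ ℕ`,
`W̃^k ∘≈_{ε/(1−3ε/2)} W^k`. -/
theorem unitCircle_approx_preserved_by_powers {n : ℕ} (ε : ℝ)
    (h0 : 0 < ε) (h1 : ε < 2 / 3)
    (W Wt : Matrix (Fin n) (Fin n) ℝ)
    (hWnn : ∀ i j, 0 ≤ W i j) (hWcol : ∀ j, ∑ i, W i j = 1)
    (hWtnn : ∀ i j, 0 ≤ Wt i j) (hWtcol : ∀ j, ∑ i, Wt i j = 1)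
    (h : UnitCircleApprox ε (W.map Complex.ofReal) (Wt.map Complex.ofReal)) :
    ∀ k : ℕ,
      UnitCircleApprox (ε / (1 - 3 * ε / 2))
        ((W ^ k).map Complex.ofReal) ((Wt ^ k).map Complex.ofReal) := by
  intro k
  have hε1 : ε < 1 := by linarith
  have hε2 : (0:ℝ) < 1 - ε := by linarith
  have hε3 : (0:ℝ) < 1 - 3 * ε / 2 := by linarith
  rcases Nat.eq_zero_or_pos k with hk0 | hk
  · subst hk0
    intro x y
    have hmap1 : ((W ^ 0).map Complex.ofReal) = (1 : Matrix (Fin n) (Fin n) ℂ) := by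
      rw [pow_zero]
      exact Matrix.map_one _ Complex.ofReal_zero Complex.ofReal_one
    have hmap2 : ((Wt ^ 0).map Complex.ofReal) = (1 : Matrix (Fin n) (Fin n) ℂ) := by
      rw [pow_zero]
      exact Matrix.map_one _ Complex.ofReal_zero Complex.ofReal_one
    rw [hmap1, hmap2, sub_self]
    have hz : sesq (0 : Matrix (Fin n) (Fin n) ℂ) x y = 0 := by
      simp [sesq, Matrix.zero_mulVec]
    rw [hz, norm_zero]
    have e1 : sesq (1 : Matrix (Fin n) (Fin n) ℂ) x x = (vnormSq x : ℂ) := by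
      rw [UCAux.sesq_one, UCAux.star_dot_self]
    have e2 : sesq (1 : Matrix (Fin n) (Fin n) ℂ) y y = (vnormSq y : ℂ) := by
      rw [UCAux.sesq_one, UCAux.star_dot_self]
    rw [e1, e2]
    have e3 : ‖(vnormSq x : ℂ) + (vnormSq y : ℂ)‖ = vnormSq x + vnormSq y := by
      rw [← Complex.ofReal_add, Complex.norm_real, Real.norm_eq_abs]
      exact abs_of_nonneg (by nlinarith [UCAux.vnormSq_nonneg x, UCAux.vnormSq_nonneg y])
    rw [e3]
    simp
  · intro x y
    set M := (W ^ k).map Complex.ofReal with hMdef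
    set c := sesq M x x + sesq M y y with hcdef
    set z : ℂ := if c = 0 then 1 else (starRingEnd ℂ) c / (‖c‖ : ℂ) with hzdef
    have hcabs : c ≠ 0 → (‖c‖ : ℝ) ≠ 0 := fun hc => by
      simpa using (norm_ne_zero_iff.2 hc)
    have hz : ‖z‖ = 1 := by
      by_cases hc : c = 0
      · rw [hzdef, if_pos hc, norm_one]
      · rw [hzdef, if_neg hc, norm_div, Complex.norm_conj, Complex.norm_real, Real.norm_eq_abs,
          abs_of_nonneg (norm_nonneg c), div_self (hcabs hc)]
    have hzc : (z * c).re = ‖c‖ := by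
      by_cases hc : c = 0
      · rw [hc, mul_zero, Complex.zero_re, norm_zero]
      · rw [hzdef, if_neg hc, div_mul_eq_mul_div]
        have e : (starRingEnd ℂ) c * c = ((Complex.normSq c : ℝ) : ℂ) := by
          rw [mul_comm, Complex.mul_conj]
        rw [e, ← Complex.ofReal_div, Complex.ofReal_re, ← Complex.sq_norm, sq,
          mul_div_assoc, div_self (hcabs hc), mul_one]
    set L := ‖sesq (M - (Wt ^ k).map Complex.ofReal) x y‖ with hLdef
    set β := ε / (2 * (1 - ε)) with hβdef
    have hβpos : 0 < β := by rw [hβdef]; positivity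
    have key : L + β * ‖c‖ ≤ β * (vnormSq x + vnormSq y) := by
      refine UCAux.lim_le k _ _ fun r hr0 hr1 => ?_
      have h2 := UCAux.main_est ε h0 h1 W Wt hWnn hWcol hWtnn hWtcol h k hk z hz r hr0 hr1 x y
      rw [← hMdef, ← hcdef, ← hLdef, ← hβdef, hzc] at h2
      have hrk : (0:ℝ) < r ^ k := by positivity
      nlinarith [h2]
    have hL0 : 0 ≤ L := norm_nonneg _
    have hBr : 0 ≤ vnormSq x + vnormSq y - ‖c‖ := by
      nlinarith [key, hL0, hβpos]
    have hLle : L ≤ β * (vnormSq x + vnormSq y - ‖c‖) := by nlinarith [key]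
    refine le_trans hLle ?_
    have hββ : β ≤ ε / (1 - 3 * ε / 2) / 2 := by
      rw [hβdef, div_div]
      refine div_le_div_of_nonneg_left h0.le ?_ ?_
      · nlinarith
      · nlinarith
    calc β * (vnormSq x + vnormSq y - ‖c‖)
        ≤ (ε / (1 - 3 * ε / 2) / 2) * (vnormSq x + vnormSq y - ‖c‖) :=
          mul_le_mul_of_nonneg_right hββ hBr
      _ = ε / (1 - 3 * ε / 2) / 2 * (vnormSq x + vnormSq y - ‖c‖) := by ring


end
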